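/- Let S be a nonempty subset of ℝⁿ, let f : ℝⁿ → ℝ ∪ {∞} with f_* := inf_{x ∈ S} f(x) finite, and let ψ : ℝⁿ → ℝ be a residual function of S. Set A := (−∞, f_*] × {0} ⊆ ℝ² and B := closure of { (f(x), ψ(x)) : x ∈ ℝⁿ, f(x) < ∞ } ⊆ ℝ². Assume A ∩ B = { (f_*, 0) } and that there exist constants c_* > 0 and α ∈ (0, 1] such that c_*·( dist(y, A) + dist(y, B) )^α ≥ dist(y, A ∩ B) / (1 + ‖y‖²) for all y ∈ ℝ². Then c_*·(1 + f(x)²)·ψ(x)^α ≥ f_* − f(x) for every x ∈ ℝⁿ with f(x) < f_* (in particular f(x) finite). -/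

import Mathlib

/-- Pointwise inequality from the proof of Theorem 5.8: under the planar
Łojasiewicz inequality for `A := (-∞, f_*] × {0}` and
`B := cl {(f(x), ψ(x)) : f(x) < ∞}` with `A ∩ B = {(f_*, 0)}`, one has
`c_* (1 + f(x)²) ψ(x)^α ≥ f_* - f(x)` whenever `f(x) < f_*`. -/
theorem stmt_10 {n : ℕ} (S : Set (EuclideanSpace ℝ (Fin n))) (hS : S.Nonempty)
    (f : EuclideanSpace ℝ (Fin n) → EReal) (hf : ∀ x, f x ≠ ⊥)
    (fstar : ℝ) (hfstar : (fstar : EReal) = ⨅ x ∈ S, f x)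
    (ψ : EuclideanSpace ℝ (Fin n) → ℝ)
    (hψ0 : ∀ x, 0 ≤ ψ x) (hψS : ∀ x, ψ x = 0 ↔ x ∈ S)
    (A B : Set (EuclideanSpace ℝ (Fin 2)))
    (hA : A = {y | y 0 ≤ fstar ∧ y 1 = 0})
    (hB : B = closure {y | ∃ x, f x ≠ ⊤ ∧ y 0 = (f x).toReal ∧ y 1 = ψ x})
    (hAB : A ∩ B = {y | y 0 = fstar ∧ y 1 = 0})
    (cstar α : ℝ) (hcstar : 0 < cstar) (hα : 0 < α) (hα1 : α ≤ 1)
    (hLoj : ∀ y : EuclideanSpace ℝ (Fin 2),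
      Metric.infDist y (A ∩ B) / (1 + ‖y‖ ^ 2) ≤
        cstar * (Metric.infDist y A + Metric.infDist y B) ^ α) :
    ∀ x, f x < (fstar : EReal) →
      fstar - (f x).toReal ≤ cstar * (1 + (f x).toReal ^ 2) * ψ x ^ α := by
  intro x hx
  have hfx_ne_top : f x ≠ ⊤ := (hx.trans_le le_top).ne
  set a := (f x).toReal with ha
  have hcoe : ((a : ℝ) : EReal) = f x := EReal.coe_toReal hfx_ne_top (hf x)
  have halt : a < fstar := by
    rw [← EReal.coe_lt_coe_iff, hcoe]; exact hx
  set y : EuclideanSpace ℝ (Fin 2) := (WithLp.equiv 2 (Fin 2 → ℝ)).symm ![a, 0] with hy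
  set z : EuclideanSpace ℝ (Fin 2) := (WithLp.equiv 2 (Fin 2 → ℝ)).symm ![a, ψ x] with hz
  set w : EuclideanSpace ℝ (Fin 2) := (WithLp.equiv 2 (Fin 2 → ℝ)).symm ![fstar, 0] with hw
  have hyA : y ∈ A := by
    rw [hA]; exact ⟨by simp [hy, halt.le], by simp [hy]⟩
  have h1 : Metric.infDist y A = 0 := Metric.infDist_zero_of_mem hyA
  have hzB : z ∈ B := by
    rw [hB]
    exact subset_closure ⟨x, hfx_ne_top, by simp [hz, ha], by simp [hz]⟩
  have hdyz : dist y z = ψ x := by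
    simp [EuclideanSpace.dist_eq, Fin.sum_univ_two, hy, hz, Real.dist_eq,
      abs_of_nonneg (hψ0 x), Real.sqrt_sq (hψ0 x)]
  have h2 : Metric.infDist y B ≤ ψ x := hdyz ▸ Metric.infDist_le_dist_of_mem hzB
  have hsingle : A ∩ B = {w} := by
    rw [hAB]
    ext v
    constructor
    · rintro ⟨h0, h1⟩
      show v = w
      ext i
      fin_cases i <;> simp [hw, h0, h1]
    · rintro rfl
      exact ⟨by simp [hw], by simp [hw]⟩
  have h3 : Metric.infDist y (A ∩ B) = fstar - a := by
    rw [hsingle, Metric.infDist_singleton]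
    have : dist y w = |a - fstar| := by
      simp [EuclideanSpace.dist_eq, Fin.sum_univ_two, hy, hw, Real.dist_eq, Real.sqrt_sq_eq_abs]
    rw [this, abs_of_nonpos (by linarith)]
    ring
  have h4 : ‖y‖ ^ 2 = a ^ 2 := by
    have : ‖y‖ = |a| := by
      simp [EuclideanSpace.norm_eq, Fin.sum_univ_two, hy, Real.sqrt_sq_eq_abs]
    rw [this, sq_abs]
  have h5 : (Metric.infDist y A + Metric.infDist y B) ^ α ≤ ψ x ^ α := by
    apply Real.rpow_le_rpow (by rw [h1]; simpa using Metric.infDist_nonneg) _ hα.le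
    rw [h1]; simpa using h2
  have hL := hLoj y
  rw [h3, h4] at hL
  have hpos : (0:ℝ) < 1 + a ^ 2 := by positivity
  rw [div_le_iff₀ hpos] at hL
  have : fstar - a ≤ cstar * ψ x ^ α * (1 + a ^ 2) := by
    refine hL.trans ?_
    apply mul_le_mul_of_nonneg_right _ hpos.le
    exact mul_le_mul_of_nonneg_left h5 hcstar.le
  nlinarith [this]
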